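/- Suppose x(k+1) = W x(k) + ε(k) where W = I - γL for a connected undirected graph with 0 < γ < 1/d_m, and ‖ε(k)‖_∞ ≤ α ρ^k with α > 0, ρ ∈ [0,1), and ∑_{k=0}^∞ ∑_{i=1}^N ε_i(k) = 0. Then every coordinate x_j(k) converges to the average (1/N)∑_{i=1}^N x_i(0). -/

import Mathlib

open Matrix Finset Filter SimpleGraph

/-- view a plain tuple as an element of Euclidean space -/
def myToE {n : ℕ} (v : Fin n → ℝ) : EuclideanSpace ℝ (Fin n) := WithLp.toLp 2 v

lemma myToE_add {n : ℕ} (v w : Fin n → ℝ) : myToE (v + w) = myToE v + myToE w := rfl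

lemma myToE_smul {n : ℕ} (c : ℝ) (v : Fin n → ℝ) : myToE (c • v) = c • myToE v := rfl

lemma norm_myToE {n : ℕ} (v : Fin n → ℝ) : ‖myToE v‖ = Real.sqrt (v ⬝ᵥ v) := by
  rw [EuclideanSpace.norm_eq]
  congr 1
  refine Finset.sum_congr rfl fun i _ => ?_
  rw [Real.norm_eq_abs, sq_abs, sq]
  rfl

lemma dot_self_nonneg {n : ℕ} (v : Fin n → ℝ) : 0 ≤ v ⬝ᵥ v :=
  Finset.sum_nonneg fun i _ => mul_self_nonneg _

lemma abs_le_norm_myToE {n : ℕ} (v : Fin n → ℝ) (i : Fin n) : |v i| ≤ ‖myToE v‖ := by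
  rw [norm_myToE, ← Real.sqrt_sq_eq_abs]
  apply Real.sqrt_le_sqrt
  rw [sq]
  exact Finset.single_le_sum (fun j _ => mul_self_nonneg (v j)) (Finset.mem_univ i)

lemma norm_myToE_le {n : ℕ} (v : Fin n → ℝ) (c : ℝ) (hc : 0 ≤ c) (h : ∀ i, |v i| ≤ c) :
    ‖myToE v‖ ≤ Real.sqrt n * c := by
  rw [norm_myToE]
  have h1 : v ⬝ᵥ v ≤ (n : ℝ) * (c * c) := by
    calc v ⬝ᵥ v ≤ ∑ _i : Fin n, c * c := by
          refine Finset.sum_le_sum fun i _ => ?_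
          calc v i * v i = |v i| * |v i| := (abs_mul_abs_self _).symm
            _ ≤ c * c := mul_le_mul (h i) (h i) (abs_nonneg _) hc
      _ = (n : ℝ) * (c * c) := by simp [Finset.sum_const, mul_comm]
  calc Real.sqrt (v ⬝ᵥ v) ≤ Real.sqrt ((n : ℝ) * (c * c)) := Real.sqrt_le_sqrt h1
    _ = Real.sqrt n * c := by
        rw [Real.sqrt_mul (Nat.cast_nonneg n), Real.sqrt_mul_self hc]

/-- convergence of a geometrically-decaying recursion -/
lemma aux_decay (σ ρ β : ℝ) (hσ0 : 0 ≤ σ) (hσ1 : σ < 1) (hρ0 : 0 ≤ ρ) (hρ1 : ρ < 1)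
    (hβ : 0 ≤ β) (u : ℕ → ℝ) (hu : ∀ k, 0 ≤ u k)
    (hrec : ∀ k, u (k + 1) ≤ σ * u k + β * ρ ^ k) :
    Tendsto u atTop (nhds 0) := by
  set τ := max σ ρ with hτ
  have hτ0 : 0 ≤ τ := le_trans hσ0 (le_max_left _ _)
  have hτ1 : τ < 1 := max_lt hσ1 hρ1
  have hb : ∀ k, u k ≤ u 0 * τ ^ k + β * k * τ ^ (k - 1) := by
    intro k
    induction k with
    | zero => simp
    | succ k ih =>
      have h2 : σ * u k ≤ τ * u k := mul_le_mul_of_nonneg_right (le_max_left _ _) (hu k)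
      have h3 : β * ρ ^ k ≤ β * τ ^ k := by
        apply mul_le_mul_of_nonneg_left _ hβ
        exact pow_le_pow_left₀ hρ0 (le_max_right _ _) k
      have h4 : τ * u k ≤ τ * (u 0 * τ ^ k + β * k * τ ^ (k - 1)) :=
        mul_le_mul_of_nonneg_left ih hτ0
      have h5 : τ * (β * k * τ ^ (k - 1)) ≤ β * k * τ ^ k := by
        rcases Nat.eq_zero_or_pos k with hk | hk
        · simp [hk]
        · refine le_of_eq ?_
          have hkk : (k - 1) + 1 = k := by omega
          calc τ * (β * k * τ ^ (k - 1)) = β * k * τ ^ ((k - 1) + 1) := by ring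
            _ = β * k * τ ^ k := by rw [hkk]
      calc u (k + 1) ≤ σ * u k + β * ρ ^ k := hrec k
        _ ≤ τ * u k + β * τ ^ k := add_le_add h2 h3
        _ ≤ τ * (u 0 * τ ^ k + β * k * τ ^ (k - 1)) + β * τ ^ k := by linarith
        _ = u 0 * τ ^ (k + 1) + (τ * (β * k * τ ^ (k - 1)) + β * τ ^ k) := by ring
        _ ≤ u 0 * τ ^ (k + 1) + (β * k * τ ^ k + β * τ ^ k) := by linarith
        _ = u 0 * τ ^ (k + 1) + β * (k + 1 : ℕ) * τ ^ ((k + 1) - 1) := by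
            push_cast; ring_nf
  have t1 : Tendsto (fun k : ℕ => u 0 * τ ^ k) atTop (nhds 0) := by
    simpa using (tendsto_pow_atTop_nhds_zero_of_lt_one hτ0 hτ1).const_mul (u 0)
  have t2 : Tendsto (fun k : ℕ => β * k * τ ^ (k - 1)) atTop (nhds 0) := by
    have hτn : ‖τ‖ < 1 := by rwa [Real.norm_eq_abs, abs_of_nonneg hτ0]
    have hs : Tendsto (fun k : ℕ => (k : ℝ) ^ 1 * τ ^ k) atTop (nhds 0) :=
      (summable_pow_mul_geometric_of_norm_lt_one 1 hτn).tendsto_atTop_zero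
    have hs' : Tendsto (fun k : ℕ => β * ((k : ℝ) ^ 1 * τ ^ k) + β * τ ^ k) atTop (nhds 0) := by
      simpa using (hs.const_mul β).add
        ((tendsto_pow_atTop_nhds_zero_of_lt_one hτ0 hτ1).const_mul β)
    rw [← tendsto_add_atTop_iff_nat 1]
    refine hs'.congr fun k => ?_
    push_cast
    ring_nf
  have hbound := t1.add t2
  rw [add_zero] at hbound
  refine squeeze_zero hu hb hbound

section Gap

variable {N : ℕ} (G : SimpleGraph (Fin N)) [DecidableRel G.Adj]

/-- quadratic form upper bound : vᵀ L v ≤ 2 d_m ‖v‖² -/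
lemma lap_form_le (u : Fin N → ℝ) :
    u ⬝ᵥ (G.lapMatrix ℝ *ᵥ u) ≤
      2 * ((Finset.univ.sup fun i => G.degree i : ℕ) : ℝ) * (u ⬝ᵥ u) := by
  set d : ℝ := ((Finset.univ.sup fun i => G.degree i : ℕ) : ℝ) with hd
  have h0 : u ⬝ᵥ (G.lapMatrix ℝ *ᵥ u) =
      (∑ i : Fin N, ∑ j : Fin N, if G.Adj i j then (u i - u j) ^ 2 else 0) / 2 := by
    rw [← Matrix.toLinearMap₂'_apply', lapMatrix_toLinearMap₂']
  have hdeg : ∀ i : Fin N, (G.degree i : ℝ) ≤ d := by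
    intro i
    rw [hd]
    exact Nat.cast_le.mpr (Finset.le_sup (f := fun i => G.degree i) (Finset.mem_univ i))
  have hsum1 : ∀ (f : Fin N → ℝ) (i : Fin N),
      (∑ j : Fin N, if G.Adj i j then f i else 0) = (G.degree i : ℝ) * f i := by
    intro f i
    rw [← Finset.sum_filter]
    rw [Finset.sum_const]
    rw [SimpleGraph.degree, neighborFinset_eq_filter]
    simp [nsmul_eq_mul]
  have h1 : (∑ i : Fin N, ∑ j : Fin N, if G.Adj i j then (u i - u j) ^ 2 else 0)
      ≤ ∑ i : Fin N, ∑ j : Fin N, if G.Adj i j then 2 * u i ^ 2 + 2 * u j ^ 2 else 0 := by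
    refine Finset.sum_le_sum fun i _ => Finset.sum_le_sum fun j _ => ?_
    by_cases h : G.Adj i j
    · simp only [h, if_true]; nlinarith [sq_nonneg (u i + u j)]
    · simp [h]
  have hsplit : (∑ i : Fin N, ∑ j : Fin N, if G.Adj i j then 2 * u i ^ 2 + 2 * u j ^ 2 else 0)
      = (∑ i : Fin N, ∑ j : Fin N, if G.Adj i j then 2 * u i ^ 2 else 0)
        + ∑ i : Fin N, ∑ j : Fin N, if G.Adj i j then 2 * u j ^ 2 else 0 := by
    rw [← Finset.sum_add_distrib]
    refine Finset.sum_congr rfl fun i _ => ?_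
    rw [← Finset.sum_add_distrib]
    refine Finset.sum_congr rfl fun j _ => ?_
    by_cases h : G.Adj i j <;> simp [h]
  have hswap : (∑ i : Fin N, ∑ j : Fin N, if G.Adj i j then 2 * u j ^ 2 else 0)
      = ∑ i : Fin N, ∑ j : Fin N, if G.Adj i j then 2 * u i ^ 2 else 0 := by
    rw [Finset.sum_comm]
    refine Finset.sum_congr rfl fun i _ => Finset.sum_congr rfl fun j _ => ?_
    congr 1
    simp [G.adj_comm]
  have h2 : (∑ i : Fin N, ∑ j : Fin N, if G.Adj i j then 2 * u i ^ 2 else 0)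
      ≤ ∑ i : Fin N, d * (2 * u i ^ 2) := by
    refine Finset.sum_le_sum fun i _ => ?_
    rw [hsum1 (fun i => 2 * u i ^ 2) i]
    have := hdeg i
    nlinarith [sq_nonneg (u i)]
  have h3 : (∑ i : Fin N, d * (2 * u i ^ 2)) = 2 * d * (u ⬝ᵥ u) := by
    simp only [dotProduct, Finset.mul_sum]
    refine Finset.sum_congr rfl fun i _ => ?_
    rw [sq]
    ring
  have hdot : 0 ≤ u ⬝ᵥ u := dot_self_nonneg u
  rw [h0]
  have := h1.trans (le_of_eq hsplit)
  linarith [hswap ▸ this, h2, h3.le, h3.ge]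

end Gap

section Gap2

open scoped MatrixOrder

variable {N : ℕ} (G : SimpleGraph (Fin N)) [DecidableRel G.Adj]

/-- L² ≼ 2 d_m L, as quadratic forms. -/
lemma lap_sq_le (v : Fin N → ℝ) :
    (G.lapMatrix ℝ *ᵥ v) ⬝ᵥ (G.lapMatrix ℝ *ᵥ v) ≤
      2 * ((Finset.univ.sup fun i => G.degree i : ℕ) : ℝ) * (v ⬝ᵥ (G.lapMatrix ℝ *ᵥ v)) := by
  classical
  have hL : (G.lapMatrix ℝ).PosSemidef := posSemidef_lapMatrix ℝ G
  set M := CFC.sqrt (G.lapMatrix ℝ) with hMdef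
  have hMM : M * M = G.lapMatrix ℝ := CFC.sqrt_mul_sqrt_self _ hL.nonneg
  have hMsym : Mᵀ = M := by
    have h := (CFC.sqrt_nonneg (G.lapMatrix ℝ)).posSemidef.1
    rwa [Matrix.IsHermitian, Matrix.conjTranspose_eq_transpose_of_trivial] at h
  have hsymdot : ∀ a b : Fin N → ℝ, (M *ᵥ a) ⬝ᵥ b = a ⬝ᵥ (M *ᵥ b) := by
    intro a b
    rw [Matrix.dotProduct_mulVec, ← Matrix.mulVec_transpose, hMsym]
  have hLv : G.lapMatrix ℝ *ᵥ v = M *ᵥ (M *ᵥ v) := by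
    rw [Matrix.mulVec_mulVec, hMM]
  set u := M *ᵥ v with hu
  have e1 : (G.lapMatrix ℝ *ᵥ v) ⬝ᵥ (G.lapMatrix ℝ *ᵥ v) = u ⬝ᵥ (G.lapMatrix ℝ *ᵥ u) := by
    rw [hLv, hsymdot, Matrix.mulVec_mulVec, hMM]
  have e2 : v ⬝ᵥ (G.lapMatrix ℝ *ᵥ v) = u ⬝ᵥ u := by
    rw [hLv, ← hsymdot]
  rw [e1, e2]
  exact lap_form_le G u

/-- the quadratic form is positive definite on the zero-sum hyperplane -/
lemma lap_form_pos (hconn : G.Connected) (v : Fin N → ℝ)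
    (hsum : ∑ i, v i = 0) (hv : v ≠ 0) : 0 < v ⬝ᵥ (G.lapMatrix ℝ *ᵥ v) := by
  have h0 : 0 ≤ v ⬝ᵥ (G.lapMatrix ℝ *ᵥ v) := by
    have := (posSemidef_lapMatrix ℝ G).dotProduct_mulVec_nonneg v
    simpa using this
  rcases h0.lt_or_eq with h | h
  · exact h
  · exfalso
    have hz : Matrix.toLinearMap₂' ℝ (G.lapMatrix ℝ) v v = 0 := by
      rw [Matrix.toLinearMap₂'_apply']
      exact h.symm
    rw [lapMatrix_toLinearMap₂'_apply'_eq_zero_iff_forall_reachable] at hz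
    have hne : Nonempty (Fin N) := hconn.nonempty
    obtain ⟨i0⟩ := hne
    have hconst : ∀ i, v i = v i0 := fun i => hz i i0 (hconn.preconnected i i0)
    have : ∑ i, v i = (N : ℝ) * v i0 := by
      rw [Finset.sum_congr rfl fun i _ => hconst i]
      simp [Finset.sum_const, mul_comm]
    rw [hsum] at this
    have hN : 0 < N := Fin.pos i0
    have hvi0 : v i0 = 0 := by
      have hN' : (N : ℝ) ≠ 0 := Nat.cast_ne_zero.mpr hN.ne'
      have := this.symm
      rcases mul_eq_zero.mp this with h' | h'
      · exact absurd h' hN'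
      · exact h'
    apply hv
    funext i
    rw [hconst i, hvi0]
    rfl

end Gap2

section Gap3

variable {N : ℕ} (G : SimpleGraph (Fin N)) [DecidableRel G.Adj]

lemma key_strict (hconn : G.Connected) (γ : ℝ) (hγ0 : 0 < γ)
    (hγd : γ * ((Finset.univ.sup fun i => G.degree i : ℕ) : ℝ) < 1)
    (W : Matrix (Fin N) (Fin N) ℝ) (hW : W = 1 - γ • G.lapMatrix ℝ)
    (v : Fin N → ℝ) (hsum : ∑ i, v i = 0) (hv : v ≠ 0) :
    (W *ᵥ v) ⬝ᵥ (W *ᵥ v) < v ⬝ᵥ v := by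
  set d : ℝ := ((Finset.univ.sup fun i => G.degree i : ℕ) : ℝ) with hd
  have hd0 : 0 ≤ d := Nat.cast_nonneg _
  set L := G.lapMatrix ℝ with hL
  have hWv : W *ᵥ v = v - γ • (L *ᵥ v) := by
    rw [hW, Matrix.sub_mulVec, Matrix.one_mulVec, Matrix.smul_mulVec]
  have hq : 0 < v ⬝ᵥ (L *ᵥ v) := lap_form_pos G hconn v hsum hv
  have hsq : (L *ᵥ v) ⬝ᵥ (L *ᵥ v) ≤ 2 * d * (v ⬝ᵥ (L *ᵥ v)) := lap_sq_le G v
  have hcomm : (L *ᵥ v) ⬝ᵥ v = v ⬝ᵥ (L *ᵥ v) := dotProduct_comm _ _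
  have hexp : (W *ᵥ v) ⬝ᵥ (W *ᵥ v) = v ⬝ᵥ v - 2 * γ * (v ⬝ᵥ (L *ᵥ v))
      + γ ^ 2 * ((L *ᵥ v) ⬝ᵥ (L *ᵥ v)) := by
    rw [hWv]
    rw [sub_dotProduct, dotProduct_sub, dotProduct_sub,
      smul_dotProduct, dotProduct_smul, dotProduct_smul,
      smul_dotProduct]
    simp only [smul_eq_mul]
    rw [hcomm]
    ring
  rw [hexp]
  nlinarith [mul_pos hγ0 hq]

lemma gap (hconn : G.Connected) (γ : ℝ) (hγ0 : 0 < γ)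
    (hγd : γ * ((Finset.univ.sup fun i => G.degree i : ℕ) : ℝ) < 1)
    (W : Matrix (Fin N) (Fin N) ℝ) (hW : W = 1 - γ • G.lapMatrix ℝ) :
    ∃ σ : ℝ, 0 ≤ σ ∧ σ < 1 ∧ ∀ v : Fin N → ℝ, (∑ i, v i) = 0 →
      ‖myToE (W *ᵥ v)‖ ≤ σ * ‖myToE v‖ := by
  classical
  set S : Set (Fin N → ℝ) := {v | (∑ i, v i) = 0 ∧ ‖myToE v‖ = 1} with hS
  have hconts : Continuous fun v : Fin N → ℝ => ∑ i, v i := by fun_prop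
  have hcontn : Continuous fun v : Fin N → ℝ => ‖myToE v‖ := by
    have : Continuous fun v : Fin N → ℝ => Real.sqrt (v ⬝ᵥ v) :=
      Real.continuous_sqrt.comp
        (continuous_finset_sum _ fun i _ => (continuous_apply i).mul (continuous_apply i))
    simpa only [norm_myToE] using this
  have hcontW : Continuous fun v : Fin N → ℝ => W *ᵥ v := by
    refine continuous_pi fun i => ?_
    show Continuous fun v : Fin N → ℝ => ∑ j, W i j * v j
    fun_prop
  have hSclosed : IsClosed S := by
    have h1 : IsClosed {v : Fin N → ℝ | (∑ i, v i) = 0} := isClosed_eq hconts continuous_const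
    have h2 : IsClosed {v : Fin N → ℝ | ‖myToE v‖ = 1} := isClosed_eq hcontn continuous_const
    exact h1.inter h2
  have hSsub : S ⊆ Metric.closedBall 0 1 := by
    intro v hv
    rw [Metric.mem_closedBall, dist_zero_right]
    rw [pi_norm_le_iff_of_nonneg zero_le_one]
    intro i
    rw [Real.norm_eq_abs]
    calc |v i| ≤ ‖myToE v‖ := abs_le_norm_myToE v i
      _ = 1 := hv.2
  have hScompact : IsCompact S :=
    (isCompact_closedBall (0 : Fin N → ℝ) 1).of_isClosed_subset hSclosed hSsub
  rcases S.eq_empty_or_nonempty with hemp | hne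
  · refine ⟨0, le_refl 0, zero_lt_one, fun v hv => ?_⟩
    by_cases h : v = 0
    · subst h
      simp [myToE, Matrix.mulVec_zero]
    · exfalso
      have ht : 0 < ‖myToE v‖ := by
        rw [norm_pos_iff]
        exact fun hh => h (by simpa [myToE] using hh)
      set t : ℝ := ‖myToE v‖ with htdef
      have hmem : t⁻¹ • v ∈ S := by
        constructor
        · simp only [Pi.smul_apply, smul_eq_mul, ← Finset.mul_sum, hv, mul_zero]
        · rw [myToE_smul, norm_smul, Real.norm_eq_abs, abs_of_pos (inv_pos.mpr ht)]
          field_simp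
          rfl
      rw [hemp] at hmem
      exact hmem
  · set f : (Fin N → ℝ) → ℝ := fun v => ‖myToE (W *ᵥ v)‖ with hf
    have hcontf : Continuous f := hcontn.comp hcontW
    obtain ⟨v0, hv0S, hmax⟩ := hScompact.exists_isMaxOn hne hcontf.continuousOn
    refine ⟨f v0, norm_nonneg _, ?_, ?_⟩
    · -- f v0 < 1
      have hv0ne : v0 ≠ 0 := by
        intro h
        rw [h] at hv0S
        have := hv0S.2
        simp [myToE] at this
      have hstrict := key_strict G hconn γ hγ0 hγd W hW v0 hv0S.1 hv0ne
      have h1 : f v0 = Real.sqrt ((W *ᵥ v0) ⬝ᵥ (W *ᵥ v0)) := norm_myToE _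
      have h2 : Real.sqrt (v0 ⬝ᵥ v0) = 1 := by rw [← norm_myToE]; exact hv0S.2
      rw [h1, ← h2]
      exact Real.sqrt_lt_sqrt (dot_self_nonneg _) hstrict
    · intro v hv
      by_cases h : v = 0
      · subst h
        simp only [Matrix.mulVec_zero]
        have h0 : ‖myToE (0 : Fin N → ℝ)‖ = 0 := by simp [myToE]
        rw [h0]
        positivity
      · have ht : 0 < ‖myToE v‖ := by
          rw [norm_pos_iff]
          exact fun hh => h (by simpa [myToE] using hh)
        set t : ℝ := ‖myToE v‖ with htdef
        have hmem : t⁻¹ • v ∈ S := by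
          constructor
          · simp only [Pi.smul_apply, smul_eq_mul, ← Finset.mul_sum, hv, mul_zero]
          · rw [myToE_smul, norm_smul, Real.norm_eq_abs, abs_of_pos (inv_pos.mpr ht)]
            field_simp
            rfl
        have hle : f (t⁻¹ • v) ≤ f v0 := hmax hmem
        have heq : f (t⁻¹ • v) = t⁻¹ * f v := by
          rw [hf]
          simp only []
          rw [Matrix.mulVec_smul, myToE_smul, norm_smul, Real.norm_eq_abs,
            abs_of_pos (inv_pos.mpr ht)]
        rw [heq] at hle
        have h1 := mul_le_mul_of_nonneg_left hle ht.le
        rw [← mul_assoc, mul_inv_cancel₀ ht.ne', one_mul] at h1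
        calc ‖myToE (W *ᵥ v)‖ = f v := rfl
          _ ≤ t * f v0 := h1
          _ = f v0 * ‖myToE v‖ := by rw [mul_comm]

end Gap3

/-- If `x(k+1) = W x(k) + ε(k)` with `W = I - γ L` for a connected graph, `0 < γ < 1/d_m`,
`‖ε(k)‖_∞ ≤ α ρ^k` with `α > 0`, `ρ ∈ [0,1)`, and the total input sums to zero, then every
coordinate of `x(k)` converges to the average of the initial states. -/
theorem stmt_5 (N : ℕ) [NeZero N] (G : SimpleGraph (Fin N)) [DecidableRel G.Adj]
    (hconn : G.Connected) (γ : ℝ)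
    (hγ0 : 0 < γ) (hγ1 : γ < 1 / ((Finset.univ.sup fun i => G.degree i : ℕ) : ℝ))
    (W : Matrix (Fin N) (Fin N) ℝ) (hW : W = 1 - γ • G.lapMatrix ℝ)
    (x ε : ℕ → Fin N → ℝ)
    (hdyn : ∀ k, x (k + 1) = W.mulVec (x k) + ε k)
    (α ρ : ℝ) (hα : 0 < α) (hρ0 : 0 ≤ ρ) (hρ1 : ρ < 1)
    (hbound : ∀ k i, |ε k i| ≤ α * ρ ^ k)
    (hzero : ∑' k : ℕ, ∑ i, ε k i = 0) :
    ∀ j : Fin N,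
      Filter.Tendsto (fun k : ℕ => x k j) Filter.atTop (nhds ((∑ i, x 0 i) / N)) := by
  intro j
  have hNpos : (0 : ℝ) < (N : ℝ) := by
    have := Nat.pos_of_ne_zero (NeZero.ne N)
    exact_mod_cast this
  -- positive max degree and γ d < 1
  have hd0 : (0 : ℝ) < ((Finset.univ.sup fun i => G.degree i : ℕ) : ℝ) := by
    rcases Nat.eq_zero_or_pos (Finset.univ.sup fun i => G.degree i) with h | h
    · rw [h] at hγ1
      norm_num at hγ1
      linarith
    · exact_mod_cast h
  have hγd : γ * ((Finset.univ.sup fun i => G.degree i : ℕ) : ℝ) < 1 :=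
    (lt_div_iff₀ hd0).mp hγ1
  obtain ⟨σ, hσ0, hσ1, hσ⟩ := gap G hconn γ hγ0 hγd W hW
  -- total input per step
  set e : ℕ → ℝ := fun k => ∑ i, ε k i with he
  have hebound : ∀ k, |e k| ≤ (N : ℝ) * (α * ρ ^ k) := by
    intro k
    calc |e k| ≤ ∑ i, |ε k i| := Finset.abs_sum_le_sum_abs _ _
      _ ≤ ∑ _i : Fin N, α * ρ ^ k := Finset.sum_le_sum fun i _ => hbound k i
      _ = (N : ℝ) * (α * ρ ^ k) := by
          rw [Finset.sum_const, Finset.card_univ, Fintype.card_fin, nsmul_eq_mul]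
  have hesumm : Summable e := by
    refine Summable.of_norm_bounded (g := fun k => ((N : ℝ) * α) * ρ ^ k)
      (((summable_geometric_of_lt_one hρ0 hρ1)).mul_left _) fun k => ?_
    show ‖e k‖ ≤ (N : ℝ) * α * ρ ^ k
    rw [Real.norm_eq_abs, mul_assoc]
    exact hebound k
  have htsum : ∑' k, e k = 0 := hzero
  have hparts : Tendsto (fun n => ∑ k ∈ Finset.range n, e k) atTop (nhds 0) := by
    have h := hesumm.hasSum.tendsto_sum_nat
    rwa [htsum] at h
  -- column sums of W are 1
  have hrow0 : ∀ i0 : Fin N, ∑ jj, G.lapMatrix ℝ i0 jj = 0 := by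
    intro i0
    have h := congrFun (lapMatrix_mulVec_const_eq_zero (R := ℝ) (G := G)) i0
    simpa [Matrix.mulVec, dotProduct] using h
  have hcol : ∀ jj : Fin N, ∑ i, W i jj = 1 := by
    intro jj
    rw [hW]
    simp only [Matrix.sub_apply, Matrix.smul_apply, smul_eq_mul]
    rw [Finset.sum_sub_distrib, ← Finset.mul_sum]
    have h1 : ∑ i, (1 : Matrix (Fin N) (Fin N) ℝ) i jj = 1 := by
      simp [Matrix.one_apply]
    have h2 : ∑ i, G.lapMatrix ℝ i jj = 0 := by
      have hsym : ∀ i, G.lapMatrix ℝ i jj = G.lapMatrix ℝ jj i := by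
        intro i
        exact ((G.isSymm_lapMatrix ℝ).apply i jj).symm
      rw [Finset.sum_congr rfl fun i _ => hsym i]
      exact hrow0 jj
    rw [h1, h2, mul_zero, sub_zero]
  -- total state
  set s : ℕ → ℝ := fun k => ∑ i, x k i with hs
  have hstep : ∀ k, s (k + 1) = s k + e k := by
    intro k
    show (∑ i, x (k + 1) i) = (∑ i, x k i) + e k
    rw [he]
    simp only [hdyn k, Pi.add_apply]
    rw [Finset.sum_add_distrib]
    congr 1
    calc ∑ i, (W *ᵥ x k) i = ∑ i, ∑ jj, W i jj * x k jj := rfl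
      _ = ∑ jj, ∑ i, W i jj * x k jj := Finset.sum_comm
      _ = ∑ jj, (∑ i, W i jj) * x k jj := by
          refine Finset.sum_congr rfl fun jj _ => ?_
          rw [Finset.sum_mul]
      _ = ∑ jj, x k jj := Finset.sum_congr rfl fun jj _ => by rw [hcol jj, one_mul]
  have hsk : ∀ k, s k = s 0 + ∑ l ∈ Finset.range k, e l := by
    intro k
    induction k with
    | zero => simp
    | succ k ih => rw [hstep k, ih, Finset.sum_range_succ]; ring
  have hst : Tendsto s atTop (nhds (s 0)) := by
    have h := (tendsto_const_nhds (x := s 0) (f := atTop (α := ℕ))).add hparts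
    rw [add_zero] at h
    exact h.congr fun k => (hsk k).symm
  -- centered state
  set y : ℕ → Fin N → ℝ := fun k i => x k i - s k / N with hy
  have hysum : ∀ k, ∑ i, y k i = 0 := by
    intro k
    show ∑ i, (x k i - s k / N) = 0
    rw [Finset.sum_sub_distrib, Finset.sum_const, Finset.card_univ, Fintype.card_fin,
      nsmul_eq_mul]
    rw [mul_div_cancel₀ _ (ne_of_gt hNpos)]
    exact sub_eq_zero.mpr rfl
  have hWconst : ∀ c : ℝ, W *ᵥ (fun _ : Fin N => c) = fun _ => c := by
    intro c
    have h1 : (fun _ : Fin N => c) = c • (fun _ : Fin N => (1 : ℝ)) := by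
      funext i; simp
    rw [h1, Matrix.mulVec_smul, hW, Matrix.sub_mulVec, Matrix.one_mulVec,
      Matrix.smul_mulVec, lapMatrix_mulVec_const_eq_zero, smul_zero, sub_zero]
  have hyrec : ∀ k, y (k + 1) = W *ᵥ (y k) + fun i => ε k i - e k / N := by
    intro k
    have hyk : y k = x k - (fun _ => s k / N) := by funext i; rfl
    funext i
    have h1 : (W *ᵥ y k) i = (W *ᵥ x k) i - s k / N := by
      rw [hyk, Matrix.mulVec_sub, hWconst (s k / N)]
      rfl
    show x (k + 1) i - s (k + 1) / N = (W *ᵥ y k) i + (ε k i - e k / N)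
    rw [h1, hstep k, hdyn k]
    show (W *ᵥ x k) i + ε k i - (s k + e k) / N
      = (W *ᵥ x k) i - s k / N + (ε k i - e k / N)
    ring
  -- contraction of the centered state
  set β : ℝ := Real.sqrt N * (2 * α) with hβ
  have hβ0 : 0 ≤ β := by positivity
  have hurec : ∀ k, ‖myToE (y (k + 1))‖ ≤ σ * ‖myToE (y k)‖ + β * ρ ^ k := by
    intro k
    have hδ : ‖myToE (fun i => ε k i - e k / N)‖ ≤ β * ρ ^ k := by
      have hc : (0 : ℝ) ≤ 2 * α * ρ ^ k := by positivity
      have h := norm_myToE_le (fun i => ε k i - e k / N) (2 * α * ρ ^ k) hc ?_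
      · calc ‖myToE (fun i => ε k i - e k / N)‖ ≤ Real.sqrt N * (2 * α * ρ ^ k) := h
          _ = β * ρ ^ k := by rw [hβ]; ring
      · intro i
        calc |ε k i - e k / N| ≤ |ε k i| + |e k / N| := abs_sub _ _
          _ ≤ α * ρ ^ k + α * ρ ^ k := by
              refine add_le_add (hbound k i) ?_
              rw [abs_div, abs_of_pos hNpos]
              rw [div_le_iff₀ hNpos]
              calc |e k| ≤ (N : ℝ) * (α * ρ ^ k) := hebound k
                _ = α * ρ ^ k * N := by ring
          _ = 2 * α * ρ ^ k := by ring
    rw [hyrec k]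
    have hadd : myToE (W *ᵥ y k + fun i => ε k i - e k / N)
        = myToE (W *ᵥ y k) + myToE (fun i => ε k i - e k / N) := rfl
    rw [hadd]
    calc ‖myToE (W *ᵥ y k) + myToE (fun i => ε k i - e k / N)‖
        ≤ ‖myToE (W *ᵥ y k)‖ + ‖myToE (fun i => ε k i - e k / N)‖ := norm_add_le _ _
      _ ≤ σ * ‖myToE (y k)‖ + β * ρ ^ k := add_le_add (hσ (y k) (hysum k)) hδ
  have hu0 : Tendsto (fun k => ‖myToE (y k)‖) atTop (nhds 0) :=
    aux_decay σ ρ β hσ0 hσ1 hρ0 hρ1 hβ0 _ (fun k => norm_nonneg _) hurec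
  have hyj : Tendsto (fun k => y k j) atTop (nhds 0) := by
    refine squeeze_zero_norm (fun k => ?_) hu0
    rw [Real.norm_eq_abs]
    exact abs_le_norm_myToE (y k) j
  have hsN : Tendsto (fun k => s k / N) atTop (nhds (s 0 / N)) := hst.div_const _
  have hfin := hyj.add hsN
  rw [zero_add] at hfin
  have hxj : (fun k => x k j) = fun k => y k j + s k / N := by
    funext k
    show x k j = x k j - s k / N + s k / N
    ring
  rw [hxj]
  exact hfin
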